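/- Let A be a closed densely defined operator from H1 to H2 and B = A† its Moore–Penrose inverse. Then A(I + A*A)^{-1} = B*(I + BB*)^{-1} as bounded operators from H1 to H2. -/
import Mathlib


open scoped InnerProductSpace

variable {H1 H2 : Type*}
  [NormedAddCommGroup H1] [InnerProductSpace ℂ H1] [CompleteSpace H1]
  [NormedAddCommGroup H2] [InnerProductSpace ℂ H2] [CompleteSpace H2]

/-- `B` is the Moore–Penrose inverse of the closed densely defined operator `A : H1 →ₗ. H2`. -/
def IsMPInverseP (A : H1 →ₗ.[ℂ] H2) (B : H2 →ₗ.[ℂ] H1) : Prop :=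
  B.IsClosed ∧
    B.domain = LinearMap.range A.toFun ⊔
      (LinearMap.ker A.adjoint.toFun).map A.adjoint.domain.subtype ∧
    (LinearMap.ker B.toFun).map B.domain.subtype =
      (LinearMap.ker A.adjoint.toFun).map A.adjoint.domain.subtype ∧
    (∀ x : A.domain, ∃ h : A x ∈ B.domain, ∃ h2 : B ⟨A x, h⟩ ∈ A.domain,
      A ⟨B ⟨A x, h⟩, h2⟩ = A x) ∧
    (∀ y : B.domain, ∃ h2 : B y ∈ A.domain, ∃ h : A ⟨B y, h2⟩ ∈ B.domain,
      B ⟨A ⟨B y, h2⟩, h⟩ = B y) ∧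
    (∀ (y : B.domain) (h2 : B y ∈ A.domain),
      A ⟨B y, h2⟩ ∈ (LinearMap.range A.toFun).topologicalClosure ∧
      ∀ z ∈ (LinearMap.range A.toFun).topologicalClosure, ⟪(y : H2) - A ⟨B y, h2⟩, z⟫_ℂ = 0) ∧
    (∀ (x : A.domain) (h : A x ∈ B.domain),
      B ⟨A x, h⟩ ∈ (LinearMap.range B.toFun).topologicalClosure ∧
      ∀ z ∈ (LinearMap.range B.toFun).topologicalClosure, ⟪(x : H1) - B ⟨A x, h⟩, z⟫_ℂ = 0)

/-- For a closed densely defined `A` with Moore–Penrose inverse `B`,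
`A(I + A*A)⁻¹ = B*(I + BB*)⁻¹` as bounded operators from `H1` to `H2`.  Here `R1` is the
bounded everywhere defined operator `(I + A*A)⁻¹` and `R2` is `(I + BB*)⁻¹`. -/
theorem mp_resolvent_eq (A : H1 →ₗ.[ℂ] H2) (hA : A.IsClosed) (hAd : Dense (A.domain : Set H1))
    (B : H2 →ₗ.[ℂ] H1) (hB : IsMPInverseP A B)
    (R1 : H1 →L[ℂ] H1)
    (hR1 : ∀ x : H1, ∃ hx : R1 x ∈ A.domain, ∃ hy : A ⟨R1 x, hx⟩ ∈ A.adjoint.domain,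
      R1 x + A.adjoint ⟨A ⟨R1 x, hx⟩, hy⟩ = x)
    (R2 : H1 →L[ℂ] H1)
    (hR2 : ∀ x : H1, ∃ hx : R2 x ∈ B.adjoint.domain, ∃ hy : B.adjoint ⟨R2 x, hx⟩ ∈ B.domain,
      R2 x + B ⟨B.adjoint ⟨R2 x, hx⟩, hy⟩ = x) :
    ∀ x : H1, ∃ (h1 : R1 x ∈ A.domain) (h2 : R2 x ∈ B.adjoint.domain),
      A ⟨R1 x, h1⟩ = B.adjoint ⟨R2 x, h2⟩ := by
  obtain ⟨-, hDom, -, hABA, hBAB, hABp, hBAp⟩ := hB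
  -- `B` is densely defined
  have hBd : Dense (B.domain : Set H2) := by
    rw [Submodule.dense_iff_topologicalClosure_eq_top, Submodule.topologicalClosure_eq_top_iff,
      Submodule.eq_bot_iff]
    intro w hw
    have horth : ∀ p : A.domain, (0 : ℂ) = ⟪w, A p⟫_ℂ := by
      intro p
      have hAp : A p ∈ B.domain := by
        rw [hDom]
        exact Submodule.mem_sup_left (LinearMap.mem_range.mpr ⟨p, rfl⟩)
      have h0 : ⟪A p, w⟫_ℂ = 0 := (Submodule.mem_orthogonal _ _).mp hw _ hAp
      exact (inner_eq_zero_symm.mp h0).symm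
    have hwA : w ∈ A.adjoint.domain :=
      LinearPMap.mem_adjoint_domain_of_exists w ⟨0, fun p => by
        rw [inner_zero_left]; exact horth p⟩
    have hw0 : A.adjoint ⟨w, hwA⟩ = 0 :=
      LinearPMap.adjoint_apply_eq hAd ⟨w, hwA⟩ (fun p => by
        rw [inner_zero_left]; exact horth p)
    have hwB : w ∈ B.domain := by
      rw [hDom]
      exact Submodule.mem_sup_right
        (Submodule.mem_map.mpr ⟨⟨w, hwA⟩, LinearMap.mem_ker.mpr hw0, rfl⟩)
    exact inner_self_eq_zero.mp ((Submodule.mem_orthogonal _ _).mp hw w hwB)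
  intro x
  obtain ⟨hu, hAu, hx1⟩ := hR1 x
  obtain ⟨hv, hBv, hx2⟩ := hR2 x
  refine ⟨hu, hv, ?_⟩
  obtain ⟨hyB, -, -⟩ := hABA ⟨R1 x, hu⟩
  -- the candidate preimage under `I + BB*`
  set v' : H1 := x - B ⟨A ⟨R1 x, hu⟩, hyB⟩ with hv'def
  -- the key adjoint identity
  have key : ∀ z : B.domain, ⟪A ⟨R1 x, hu⟩, (z : H2)⟫_ℂ = ⟪v', B z⟫_ℂ := by
    intro z
    obtain ⟨hz, -, -⟩ := hBAB z
    have h1 : ⟪A.adjoint ⟨A ⟨R1 x, hu⟩, hAu⟩, B z⟫_ℂ = ⟪A ⟨R1 x, hu⟩, A ⟨B z, hz⟩⟫_ℂ :=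
      LinearPMap.adjoint_isFormalAdjoint hAd ⟨A ⟨R1 x, hu⟩, hAu⟩ ⟨B z, hz⟩
    have hymem : A ⟨R1 x, hu⟩ ∈ (LinearMap.range A.toFun).topologicalClosure :=
      Submodule.le_topologicalClosure _ (LinearMap.mem_range.mpr ⟨⟨R1 x, hu⟩, rfl⟩)
    have h2 : ⟪A ⟨R1 x, hu⟩, (z : H2) - A ⟨B z, hz⟩⟫_ℂ = 0 :=
      inner_eq_zero_symm.mp ((hABp z hz).2 _ hymem)
    have h3 : ⟪(R1 x : H1) - B ⟨A ⟨R1 x, hu⟩, hyB⟩, B z⟫_ℂ = 0 :=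
      (hBAp ⟨R1 x, hu⟩ hyB).2 (B z)
        (Submodule.le_topologicalClosure _ (LinearMap.mem_range.mpr ⟨z, rfl⟩))
    have hsplit : v' = (R1 x - B ⟨A ⟨R1 x, hu⟩, hyB⟩) + A.adjoint ⟨A ⟨R1 x, hu⟩, hAu⟩ := by
      rw [hv'def, show (R1 x - B ⟨A ⟨R1 x, hu⟩, hyB⟩) + A.adjoint ⟨A ⟨R1 x, hu⟩, hAu⟩ =
        (R1 x + A.adjoint ⟨A ⟨R1 x, hu⟩, hAu⟩) - B ⟨A ⟨R1 x, hu⟩, hyB⟩ from by abel, hx1]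
    rw [hsplit, inner_add_left, h3, zero_add, h1]
    have h4 : ⟪A ⟨R1 x, hu⟩, (z : H2)⟫_ℂ - ⟪A ⟨R1 x, hu⟩, A ⟨B z, hz⟩⟫_ℂ = 0 := by
      rw [← inner_sub_right]; exact h2
    exact sub_eq_zero.mp h4
  have hv'dom : v' ∈ B.adjoint.domain :=
    LinearPMap.mem_adjoint_domain_of_exists v' ⟨A ⟨R1 x, hu⟩, key⟩
  have hv'val : B.adjoint ⟨v', hv'dom⟩ = A ⟨R1 x, hu⟩ :=
    LinearPMap.adjoint_apply_eq hBd ⟨v', hv'dom⟩ key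
  -- uniqueness: `R2 x = v'`
  have hd : R2 x - v' ∈ B.adjoint.domain := sub_mem hv hv'dom
  have hdval : B.adjoint ⟨R2 x - v', hd⟩ = B.adjoint ⟨R2 x, hv⟩ - A ⟨R1 x, hu⟩ := by
    have hsub : (⟨R2 x - v', hd⟩ : B.adjoint.domain) = ⟨R2 x, hv⟩ - ⟨v', hv'dom⟩ := rfl
    rw [hsub, LinearPMap.map_sub, hv'val]
  have hwdom : B.adjoint ⟨R2 x, hv⟩ - A ⟨R1 x, hu⟩ ∈ B.domain := sub_mem hBv hyB
  have hsum : (R2 x - v') + B ⟨B.adjoint ⟨R2 x, hv⟩ - A ⟨R1 x, hu⟩, hwdom⟩ = 0 := by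
    have e1 : B ⟨B.adjoint ⟨R2 x, hv⟩ - A ⟨R1 x, hu⟩, hwdom⟩ =
        B ⟨B.adjoint ⟨R2 x, hv⟩, hBv⟩ - B ⟨A ⟨R1 x, hu⟩, hyB⟩ := by
      have hsub : (⟨B.adjoint ⟨R2 x, hv⟩ - A ⟨R1 x, hu⟩, hwdom⟩ : B.domain) =
          ⟨B.adjoint ⟨R2 x, hv⟩, hBv⟩ - ⟨A ⟨R1 x, hu⟩, hyB⟩ := rfl
      rw [hsub, LinearPMap.map_sub]
    have e2 : v' + B ⟨A ⟨R1 x, hu⟩, hyB⟩ = x := by rw [hv'def]; abel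
    have e3 : (R2 x - v') + (B ⟨B.adjoint ⟨R2 x, hv⟩, hBv⟩ - B ⟨A ⟨R1 x, hu⟩, hyB⟩) =
        (R2 x + B ⟨B.adjoint ⟨R2 x, hv⟩, hBv⟩) - (v' + B ⟨A ⟨R1 x, hu⟩, hyB⟩) := by abel
    rw [e1, e3, hx2, e2, sub_self]
  have hinner : (0 : ℂ) = ⟪(R2 x - v' : H1), R2 x - v'⟫_ℂ +
      ⟪(R2 x - v' : H1), B ⟨B.adjoint ⟨R2 x, hv⟩ - A ⟨R1 x, hu⟩, hwdom⟩⟫_ℂ := by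
    rw [← inner_add_right, hsum, inner_zero_right]
  have hBad : ⟪(R2 x - v' : H1), B ⟨B.adjoint ⟨R2 x, hv⟩ - A ⟨R1 x, hu⟩, hwdom⟩⟫_ℂ =
      ((‖B.adjoint ⟨R2 x, hv⟩ - A ⟨R1 x, hu⟩‖ : ℂ)) ^ 2 := by
    have := LinearPMap.adjoint_isFormalAdjoint hBd (⟨R2 x - v', hd⟩ : B.adjoint.domain)
      (⟨B.adjoint ⟨R2 x, hv⟩ - A ⟨R1 x, hu⟩, hwdom⟩ : B.domain)
    rw [hdval] at this
    rw [← this, inner_self_eq_norm_sq_to_K]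
    rfl
  rw [hBad, inner_self_eq_norm_sq_to_K] at hinner
  have hre : ‖(R2 x - v' : H1)‖ ^ 2 + ‖B.adjoint ⟨R2 x, hv⟩ - A ⟨R1 x, hu⟩‖ ^ 2 = 0 := by
    have h2c : ((‖(R2 x - v' : H1)‖ ^ 2 + ‖B.adjoint ⟨R2 x, hv⟩ - A ⟨R1 x, hu⟩‖ ^ 2 : ℝ) : ℂ)
        = 0 := by push_cast; exact hinner.symm
    exact_mod_cast h2c
  have hdzero : R2 x - v' = 0 := by
    have h1 : ‖(R2 x - v' : H1)‖ ^ 2 = 0 := by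
      nlinarith [sq_nonneg (‖(R2 x - v' : H1)‖), sq_nonneg (‖B.adjoint ⟨R2 x, hv⟩ - A ⟨R1 x, hu⟩‖)]
    exact norm_eq_zero.mp (sq_eq_zero_iff.mp h1)
  have hveq : (⟨R2 x, hv⟩ : B.adjoint.domain) = ⟨v', hv'dom⟩ :=
    Subtype.ext (sub_eq_zero.mp hdzero)
  rw [hveq, hv'val]
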